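/- If the upper triangular matrix ring T_2(R) is VNL, then R is a division ring. -/

import Mathlib

/-- An element `a` of a ring is (von Neumann) regular if `a = a * x * a` for some `x`. -/
def IsVNRegular {R : Type*} [Ring R] (a : R) : Prop := ∃ x : R, a = a * x * a

/-- A ring is VNL if for every `a`, either `a` or `1 - a` is regular. -/
def IsVNLRing (R : Type*) [Ring R] : Prop :=
  ∀ a : R, IsVNRegular a ∨ IsVNRegular (1 - a)

/-- The ring of upper triangular `n × n` matrices over `R`, as a subring of `Mₙ(R)`. -/
def upperTriangularSubring (n : ℕ) (R : Type*) [Ring R] :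
    Subring (Matrix (Fin n) (Fin n) R) where
  carrier := {M | ∀ i j, j < i → M i j = 0}
  zero_mem' := fun _ _ _ => rfl
  one_mem' := fun _ _ h => Matrix.one_apply_ne h.ne'
  add_mem' := fun ha hb i j h => by
    simp [Matrix.add_apply, ha i j h, hb i j h]
  neg_mem' := fun ha i j h => by simp [Matrix.neg_apply, ha i j h]
  mul_mem' := fun {A B} ha hb i j h => by
    rw [Matrix.mul_apply]
    refine Finset.sum_eq_zero fun k _ => ?_
    rcases lt_or_ge k i with hk | hk
    · rw [ha i k hk, zero_mul]
    · rw [hb k j (lt_of_lt_of_le h hk), mul_zero]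

/-- The upper triangular matrix `!![x, y; 0, z]` as an element of `T₂(R)`. -/
def triElem {R : Type*} [Ring R] (x y z : R) : upperTriangularSubring 2 R :=
  ⟨!![x, y; 0, z], by intro i j hij; fin_cases i <;> fin_cases j <;> simp_all⟩

lemma one_sub_triElem {R : Type*} [Ring R] (x y z : R) :
    (1 : upperTriangularSubring 2 R) - triElem x y z = triElem (1 - x) (-y) (1 - z) := by
  apply Subtype.ext
  show (1 : Matrix (Fin 2) (Fin 2) R) - !![x, y; 0, z] = _
  ext i j
  fin_cases i <;> fin_cases j <;> simp [triElem, Matrix.one_apply]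

/-- Extract the entrywise equations from regularity of a triangular matrix. -/
lemma triElem_regular_iff {R : Type*} [Ring R] {x y z : R}
    (hr : IsVNRegular (triElem x y z)) :
    ∃ p q r : R, x = x * p * x ∧ y = x * p * y + x * q * z + y * r * z ∧ z = z * r * z := by
  obtain ⟨X, hX⟩ := hr
  have h10 : X.1 1 0 = 0 := X.2 1 0 (by decide)
  have hm := congrArg Subtype.val hX
  refine ⟨X.1 0 0, X.1 0 1, X.1 1 1, ?_, ?_, ?_⟩
  · have := congrFun (congrFun hm 0) 0
    simp [triElem, Matrix.mul_apply, Matrix.vecMul, dotProduct,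
      Fin.sum_univ_two, h10] at this
    linear_combination (norm := noncomm_ring) this
  · have := congrFun (congrFun hm 0) 1
    simp [triElem, Matrix.mul_apply, Matrix.vecMul, dotProduct,
      Fin.sum_univ_two, h10] at this
    linear_combination (norm := noncomm_ring) this
  · have := congrFun (congrFun hm 1) 1
    simp [triElem, Matrix.mul_apply, Matrix.vecMul, dotProduct,
      Fin.sum_univ_two, h10] at this
    linear_combination (norm := noncomm_ring) this

/-- If `T₂(R)` is VNL, then `R` is von Neumann regular. -/
lemma regular_of_vnl {R : Type*} [Ring R]
    (h : IsVNLRing (upperTriangularSubring 2 R)) (a : R) : ∃ p : R, a = a * p * a := by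
  rcases h (triElem a 0 (1 - a)) with hr | hr
  · obtain ⟨p, _, _, h1, _, _⟩ := triElem_regular_iff hr
    exact ⟨p, h1⟩
  · rw [one_sub_triElem] at hr
    simp only [sub_sub_cancel, neg_zero] at hr
    obtain ⟨_, _, r, _, _, h3⟩ := triElem_regular_iff hr
    exact ⟨r, h3⟩

/-- If `T₂(R)` is VNL, then `R` has only trivial idempotents. -/
lemma idem_trivial_of_vnl {R : Type*} [Ring R]
    (h : IsVNLRing (upperTriangularSubring 2 R)) (e : R) (he : e * e = e) :
    e = 0 ∨ e = 1 := by
  set f : R := 1 - e with hf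
  have hef : e * f = 0 := by rw [hf, mul_sub, mul_one, he, sub_self]
  have hfe : f * e = 0 := by rw [hf, sub_mul, one_mul, he, sub_self]
  have hef' : ∀ z : R, e * (f * z) = 0 := fun z => by rw [← mul_assoc, hef, zero_mul]
  have hfe' : ∀ z : R, f * (e * z) = 0 := fun z => by rw [← mul_assoc, hfe, zero_mul]
  rcases h (triElem f 1 f) with hr | hr
  · left
    obtain ⟨p, q, r, _, h2, _⟩ := triElem_regular_iff hr
    calc e = e * 1 * e := by rw [mul_one, he]
      _ = e * (f * p * 1 + f * q * f + 1 * r * f) * e := by rw [← h2]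
      _ = 0 := by simp [mul_add, add_mul, mul_assoc, hef', hfe', hef, hfe]
  · right
    rw [one_sub_triElem] at hr
    have h1f : (1 : R) - f = e := by rw [hf, sub_sub_cancel]
    rw [h1f] at hr
    obtain ⟨p, q, r, _, h2, _⟩ := triElem_regular_iff hr
    have hff : f * f = f := by rw [hf, mul_sub, mul_one, sub_mul, one_mul, he, sub_self, sub_zero]
    have hf0 : f = 0 := by
      have : f = -(f * (-1 : R) * f) := by
        rw [mul_neg, mul_one, neg_mul, neg_neg, hff]
      calc f = -(f * (-1 : R) * f) := this
        _ = -(f * (e * p * (-1) + e * q * e + (-1) * r * e) * f) := by rw [← h2]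
        _ = 0 := by
          simp [mul_add, add_mul, mul_assoc, hef', hfe', hef, hfe, mul_neg, neg_mul]
    have : e = 1 - f := by rw [hf, sub_sub_cancel]
    rw [this, hf0, sub_zero]

/-- If `T₂(R)` is VNL (with `R` nonzero), then `R` is a division ring: every nonzero
element of `R` is a unit. -/
theorem divisionRing_of_upperTriangular_two_isVNL {R : Type*} [Ring R] [Nontrivial R]
    (h : IsVNLRing (upperTriangularSubring 2 R)) :
    ∀ a : R, a ≠ 0 → IsUnit a := by
  intro a ha
  obtain ⟨x, hx⟩ := regular_of_vnl h a
  have hu : (a * x) * (a * x) = a * x := by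
    calc (a * x) * (a * x) = (a * x * a) * x := by noncomm_ring
      _ = a * x := by rw [← hx]
  have hv : (x * a) * (x * a) = x * a := by
    calc (x * a) * (x * a) = x * (a * x * a) := by noncomm_ring
      _ = x * a := by rw [← hx]
  have hax : a * x = 1 := by
    rcases idem_trivial_of_vnl h (a * x) hu with h0 | h1
    · exfalso; apply ha
      rw [hx, h0, zero_mul]
    · exact h1
  have hxa : x * a = 1 := by
    rcases idem_trivial_of_vnl h (x * a) hv with h0 | h1
    · exfalso; apply ha
      rw [hx, mul_assoc, h0, mul_zero]
    · exact h1
  exact ⟨⟨a, x, hax, hxa⟩, rfl⟩
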